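/- arXiv:1105.2948 — 4 statements merged into one kernel-verified Lean document; each statement's English description precedes it below -/
import Mathlib

section
/- The function $F(x,A) = \frac{\int_{x/A^{1/3}}^\infty e^{-2y^3/9}\,dy}{\int_0^\infty e^{-2y^3/9}\,dy}$ satisfies $\partial_x^2 F(x,A) - 2x\,\partial_A F(x,A) = 0$ for all $x > 0$ and $A > 0$, together with the boundary conditions $F(0,A) = 1$ for $A>0$ and $\lim_{x\to\infty} F(x,A) = 0$. -/
open MeasureTheory Filter Set

/-- The function `F(x,A) = (∫_{x/A^{1/3}}^∞ e^{-2y³/9} dy) / (∫_0^∞ e^{-2y³/9} dy)`. -/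
noncomputable def F1 (x A : ℝ) : ℝ :=
  (∫ y in Set.Ioi (x / A ^ ((1:ℝ)/3)), Real.exp (-2 * y ^ 3 / 9)) /
  (∫ y in Set.Ioi (0:ℝ), Real.exp (-2 * y ^ 3 / 9))

noncomputable def ff (y : ℝ) : ℝ := Real.exp (-2 * y ^ 3 / 9)

lemma ff_cont : Continuous ff := by unfold ff; fun_prop

lemma ff_int (t : ℝ) : IntegrableOn ff (Ioi t) := by
  have h3 : IntegrableOn ff (Ioi 3) := by
    apply Integrable.mono' (exp_neg_integrableOn_Ioi 3 (one_pos))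
      ff_cont.aestronglyMeasurable.restrict
    filter_upwards [ae_restrict_mem measurableSet_Ioi] with y hy
    have hy' : (3:ℝ) ≤ y := le_of_lt hy
    simp only [ff, Real.norm_eq_abs, Real.abs_exp]
    apply Real.exp_le_exp.2
    nlinarith [mul_nonneg (mul_nonneg (by linarith : (0:ℝ) ≤ y - 3) (by linarith : (0:ℝ) ≤ y - 3)) (by linarith : (0:ℝ) ≤ y - 3), sq_nonneg (y - 3)]
  have hc : IntegrableOn ff (Ioc t 3) := (ff_cont.integrableOn_Icc).mono_set Ioc_subset_Icc_self
  exact (hc.union h3).mono_set (fun y hy => by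
    rcases le_or_gt y 3 with h | h
    · exact Or.inl ⟨hy, h⟩
    · exact Or.inr h)

noncomputable def cc : ℝ := ∫ y in Ioi (0:ℝ), ff y

lemma cc_pos : 0 < cc := by
  rw [cc]
  refine (setIntegral_pos_iff_support_of_nonneg_ae ?_ (ff_int 0)).2 ?_
  · filter_upwards with y using (Real.exp_pos _).le
  · have hs : Function.support ff = univ := by
      ext y; simp [ff, Real.exp_ne_zero]
    rw [hs, univ_inter, Real.volume_Ioi]
    simp

lemma G_split (t : ℝ) : (∫ y in Ioi t, ff y) = cc - ∫ y in (0:ℝ)..t, ff y := by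
  rcases le_or_gt 0 t with h | h
  · rw [cc, ← Ioc_union_Ioi_eq_Ioi h,
      setIntegral_union (Ioc_disjoint_Ioi le_rfl) measurableSet_Ioi
        ((ff_int 0).mono_set Ioc_subset_Ioi_self) (ff_int t),
      intervalIntegral.integral_of_le h]
    ring
  · rw [cc, ← Ioc_union_Ioi_eq_Ioi h.le,
      setIntegral_union (Ioc_disjoint_Ioi le_rfl) measurableSet_Ioi
        ((ff_int t).mono_set Ioc_subset_Ioi_self) (ff_int 0),
      intervalIntegral.integral_symm, intervalIntegral.integral_of_le h.le]
    ring

lemma G_deriv (t : ℝ) :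
    HasDerivAt (fun s => ∫ y in Ioi s, ff y) (-(ff t)) t := by
  have h1 : HasDerivAt (fun s => ∫ y in (0:ℝ)..s, ff y) (ff t) t :=
    intervalIntegral.integral_hasDerivAt_right (ff_cont.intervalIntegrable 0 t)
      (ff_cont.stronglyMeasurableAtFilter _ _) ff_cont.continuousAt
  have : (fun s => ∫ y in Ioi s, ff y) = fun s => cc - ∫ y in (0:ℝ)..s, ff y :=
    funext G_split
  rw [this]
  exact h1.const_sub cc

/-- `F1` satisfies `∂²ₓF - 2x ∂_A F = 0` on `{x > 0, A > 0}`, with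
`F(0,A) = 1` and `F(x,A) → 0` as `x → ∞`. -/
theorem stmt_1 :
    (∀ x A : ℝ, 0 < x → 0 < A →
      deriv (fun y => deriv (fun z => F1 z A) y) x - 2 * x * deriv (fun a => F1 x a) A = 0) ∧
    (∀ A : ℝ, 0 < A → F1 0 A = 1) ∧
    (∀ A : ℝ, 0 < A → Tendsto (fun x => F1 x A) atTop (nhds 0)) := by
  have hF : ∀ x A : ℝ, F1 x A = (∫ y in Ioi (x / A ^ ((1:ℝ)/3)), ff y) / cc := fun x A => rfl
  refine ⟨?_, ?_, ?_⟩
  · intro x A hx hA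
    set B : ℝ := A ^ ((1:ℝ)/3) with hBdef
    have hB : 0 < B := Real.rpow_pos_of_pos hA _
    -- first x-derivative
    have e1 : deriv (fun z => F1 z A) =
        fun y => -Real.exp (-2 * (y / B) ^ 3 / 9) * (1 / B) / cc := by
      funext y
      have hu : HasDerivAt (fun z : ℝ => z / B) (1 / B) y := (hasDerivAt_id y).div_const B
      have h := ((G_deriv (y / B)).comp y hu).div_const cc
      have hfun : (fun z => F1 z A) =
          fun z => (∫ t in Ioi (z / B), ff t) / cc := funext fun z => hF z A
      rw [hfun]
      have := h.deriv
      simp only [Function.comp] at this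
      rw [this, ff]
    -- second x-derivative
    have hpow : HasDerivAt (fun y : ℝ => -2 * (y / B) ^ 3 / 9)
        (-2 * ((3:ℕ) * (x / B) ^ 2 * (1 / B)) / 9) x := by
      exact ((((hasDerivAt_id x).div_const B).pow 3).const_mul (-2)).div_const 9
    have hexp := hpow.exp
    have hd2 := ((hexp.neg).mul_const (1 / B)).div_const cc
    have hgoal2 : deriv (fun y => deriv (fun z => F1 z A) y) x =
        -(Real.exp (-2 * (x / B) ^ 3 / 9) * (-2 * ((3:ℕ) * (x / B) ^ 2 * (1 / B)) / 9)) *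
          (1 / B) / cc := by
      have : (fun y => deriv (fun z => F1 z A) y) =
          fun y => -Real.exp (-2 * (y / B) ^ 3 / 9) * (1 / B) / cc := by
        funext y; rw [e1]
      rw [this]
      exact hd2.deriv
    -- A-derivative
    have hr : HasDerivAt (fun a : ℝ => a ^ ((1:ℝ)/3)) ((1/3) * A ^ ((1:ℝ)/3 - 1)) A :=
      Real.hasDerivAt_rpow_const (Or.inl hA.ne')
    have hinv : HasDerivAt (fun a : ℝ => (a ^ ((1:ℝ)/3))⁻¹)
        (-((1/3) * A ^ ((1:ℝ)/3 - 1)) / B ^ 2) A := hr.inv hB.ne'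
    have hq : HasDerivAt (fun a : ℝ => x / a ^ ((1:ℝ)/3))
        (x * (-((1/3) * A ^ ((1:ℝ)/3 - 1)) / B ^ 2)) A := by
      simpa [div_eq_mul_inv] using hinv.const_mul x
    have hGA := ((G_deriv (x / B)).comp A hq).div_const cc
    have hgoalA : deriv (fun a => F1 x a) A =
        -(ff (x / B)) * (x * (-((1/3) * A ^ ((1:ℝ)/3 - 1)) / B ^ 2)) / cc := by
      have hfun : (fun a => F1 x a) =
          fun a => (∫ t in Ioi (x / a ^ ((1:ℝ)/3)), ff t) / cc := funext fun a => hF x a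
      rw [hfun]
      have := hGA.deriv
      simp only [Function.comp] at this
      rw [this]
    -- the PDE
    rw [hgoal2, hgoalA]
    have hE : A ^ ((1:ℝ)/3 - 1) = 1 / B ^ 2 := by
      rw [eq_div_iff (pow_ne_zero 2 hB.ne'), hBdef, ← Real.rpow_natCast (A ^ ((1:ℝ)/3)) 2,
        ← Real.rpow_mul hA.le, ← Real.rpow_add hA]
      norm_num
    rw [ff, hE]
    have hcc := cc_pos.ne'
    field_simp
    ring
  · intro A hA
    rw [hF, zero_div, ← cc]
    exact div_self cc_pos.ne'
  · intro A hA
    set B : ℝ := A ^ ((1:ℝ)/3) with hBdef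
    have hB : 0 < B := Real.rpow_pos_of_pos hA _
    have h1 : Tendsto (fun x : ℝ => x / B) atTop atTop :=
      tendsto_id.atTop_div_const hB
    have h2 := intervalIntegral_tendsto_integral_Ioi 0 (ff_int 0) h1
    have h3 : Tendsto (fun x => (∫ y in Ioi (x / B), ff y) / cc) atTop (nhds 0) := by
      have ht : Tendsto (fun x : ℝ => (cc - ∫ y in (0:ℝ)..(x / B), ff y) / cc) atTop
          (nhds ((cc - cc) / cc)) := (tendsto_const_nhds.sub h2).div_const cc
      simp only [sub_self, zero_div] at ht
      refine ht.congr fun x => ?_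
      rw [G_split]
    refine h3.congr fun x => ?_
    rw [hF]
end

section
/- Let $U_1, U_2$ be independent, identically distributed positive random variables with $P(U_i \le a) = \exp(-\frac{2}{9a} + O(\log(1/a)))$ as $a \to 0^+$. Then as $x \to 0^+$, $P(U_1 + U_2 \le x) = \exp(-\frac{8}{9x} + O(\log(1/x)))$. -/
open MeasureTheory ProbabilityTheory Filter

set_option maxHeartbeats 16000000 in
/-- if `U₁, U₂` are i.i.d. positive with
`P(Uᵢ ≤ a) = exp(-2/(9a) + O(log(1/a)))` as `a → 0⁺`, then
`P(U₁ + U₂ ≤ x) = exp(-8/(9x) + O(log(1/x)))` as `x → 0⁺`. -/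
theorem stmt_3 {Ω : Type*} {mΩ : MeasurableSpace Ω}
    (P : Measure Ω) [IsProbabilityMeasure P]
    (U₁ U₂ : Ω → ℝ) (hm₁ : Measurable U₁) (hm₂ : Measurable U₂)
    (hpos : ∀ᵐ ω ∂P, 0 < U₁ ω)
    (hindep : IndepFun U₁ U₂ P)
    (hid : IdentDistrib U₁ U₂ P P)
    (htail : ∃ C > (0:ℝ), ∃ a₀ > (0:ℝ), ∀ a : ℝ, 0 < a → a < a₀ →
      |Real.log ((P {ω | U₁ ω ≤ a}).toReal) + 2 / (9 * a)| ≤ C * Real.log (1 / a)) :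
    ∃ C > (0:ℝ), ∃ x₀ > (0:ℝ), ∀ x : ℝ, 0 < x → x < x₀ →
      |Real.log ((P {ω | U₁ ω + U₂ ω ≤ x}).toReal) + 8 / (9 * x)| ≤ C * Real.log (1 / x) := by
  obtain ⟨C, hC, a₀, ha₀, htb⟩ := htail
  -- notation
  set p : ℝ → ℝ := fun a => (P {ω | U₁ ω ≤ a}).toReal with hp
  have hpnn : ∀ a, 0 ≤ p a := fun a => ENNReal.toReal_nonneg
  -- identically distributed : same tail for U₂
  have hidm : ∀ a : ℝ, P {ω | U₂ ω ≤ a} = P {ω | U₁ ω ≤ a} := by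
    intro a
    have := hid.measure_mem_eq (measurableSet_Iic (a := a))
    exact (this).symm
  -- independence product formula
  have hprod : ∀ a b : ℝ, P ({ω | U₁ ω ≤ a} ∩ {ω | U₂ ω ≤ b})
      = P {ω | U₁ ω ≤ a} * P {ω | U₂ ω ≤ b} := by
    intro a b
    exact hindep.measure_inter_preimage_eq_mul (Set.Iic a) (Set.Iic b)
      measurableSet_Iic measurableSet_Iic
  -- positivity of p for small a
  have hppos : ∀ a : ℝ, 0 < a → a < a₀ → a < 1 / (81 * C ^ 2 + 1) → 0 < p a := by
    intro a ha haa ha1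
    rcases lt_or_eq_of_le (hpnn a) with h | h
    · exact h
    · exfalso
      have hb := htb a ha haa
      rw [show (P {ω | U₁ ω ≤ a}).toReal = p a from rfl, ← h, Real.log_zero, zero_add] at hb
      have habs : 2 / (9 * a) ≤ C * Real.log (1 / a) := (abs_le.1 hb).2
      set s := Real.sqrt (1 / a) with hs
      have hs0 : 0 ≤ s := Real.sqrt_nonneg _
      have hs2 : s ^ 2 = 1 / a := Real.sq_sqrt (by positivity)
      have hlog : Real.log (1 / a) ≤ 2 * s := by
        have h1 : Real.log (1 / a) = 2 * Real.log s := by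
          rw [hs, Real.log_sqrt (by positivity)]; ring
        have h2 : Real.log s ≤ s - 1 := by
          apply Real.log_le_sub_one_of_pos
          have : (1:ℝ) < 1 / a := by
            rw [lt_div_iff₀ ha]
            have : a < 1 := lt_of_lt_of_le ha1 (by
              rw [div_le_one (by positivity)]; nlinarith)
            linarith
          nlinarith [hs2]
        linarith [h1, h2]
      have hta : 81 * C ^ 2 + 1 < 1 / a := (lt_div_iff₀ ha).2 (by
        have := (lt_div_iff₀ (show (0:ℝ) < 81 * C ^ 2 + 1 by positivity)).1 ha1
        linarith)
      have h2a : 2 / (9 * a) = 2 / 9 * s ^ 2 := by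
        rw [hs2]; field_simp
      nlinarith [mul_le_mul_of_nonneg_left hlog (le_of_lt hC)]
  -- upper bound for p
  have hpub : ∀ a : ℝ, 0 < a → a < a₀ →
      p a ≤ Real.exp (-(2 / (9 * a)) + C * Real.log (1 / a)) := by
    intro a ha haa
    have hb0 := htb a ha haa
    rw [show (P {ω | U₁ ω ≤ a}).toReal = p a from rfl] at hb0
    have hb := (abs_le.1 hb0).2
    calc p a ≤ Real.exp (Real.log (p a)) := Real.le_exp_log _
      _ ≤ _ := Real.exp_le_exp.2 (by linarith)
  -- lower bound for log p
  have hplb : ∀ a : ℝ, 0 < a → a < a₀ →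
      -(2 / (9 * a)) - C * Real.log (1 / a) ≤ Real.log (p a) := by
    intro a ha haa
    have hb0 := htb a ha haa
    rw [show (P {ω | U₁ ω ≤ a}).toReal = p a from rfl] at hb0
    have := (abs_le.1 hb0).1
    linarith
  refine ⟨10 * C + 3, by linarith, min a₀ (min (1/3) (1 / (81 * C ^ 2 + 1))),
    lt_min ha₀ (lt_min (by norm_num) (by positivity)), ?_⟩
  intro x hx hxlt
  have hxa₀ : x < a₀ := lt_of_lt_of_le hxlt (min_le_left _ _)
  have hx3 : x < 1/3 := lt_of_lt_of_le hxlt ((min_le_right _ _).trans (min_le_left _ _))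
  have hxC : x < 1 / (81 * C ^ 2 + 1) :=
    lt_of_lt_of_le hxlt ((min_le_right _ _).trans (min_le_right _ _))
  set L := Real.log (1/x) with hL
  have hL1 : 1 ≤ L := by
    rw [hL, Real.le_log_iff_exp_le (by positivity)]
    have h3 : (3:ℝ) ≤ 1/x := by rw [le_div_iff₀ hx]; linarith
    have := Real.exp_one_lt_d9
    linarith
  have hLpos : 0 < L := lt_of_lt_of_le one_pos hL1
  ---- LOWER BOUND ----
  have hhalf : 0 < p (x/2) := hppos _ (by linarith) (by linarith) (by linarith)
  have hsub : {ω | U₁ ω ≤ x/2} ∩ {ω | U₂ ω ≤ x/2} ⊆ {ω | U₁ ω + U₂ ω ≤ x} := by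
    rintro ω ⟨h1, h2⟩
    simp only [Set.mem_setOf_eq] at *
    linarith
  set Q := (P {ω | U₁ ω + U₂ ω ≤ x}).toReal with hQ
  have hmono : (p (x/2))^2 ≤ Q := by
    have h1 : P ({ω | U₁ ω ≤ x/2} ∩ {ω | U₂ ω ≤ x/2}) ≤ P {ω | U₁ ω + U₂ ω ≤ x} :=
      measure_mono hsub
    have h3 := ENNReal.toReal_mono (measure_ne_top P _) h1
    rw [hprod (x/2) (x/2), hidm, ENNReal.toReal_mul] at h3
    calc (p (x/2))^2 = (P {ω | U₁ ω ≤ x/2}).toReal * (P {ω | U₁ ω ≤ x/2}).toReal := by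
          rw [pow_two]
      _ ≤ Q := h3
  have hQpos : 0 < Q := lt_of_lt_of_le (by positivity) hmono
  have h4 : Real.log (1/(x/2)) ≤ 2 * L := by
    have ha : (1:ℝ)/(x/2) ≤ (1/x)^2 := by
      rw [div_pow, one_pow, div_le_div_iff₀ (by positivity) (by positivity)]
      nlinarith
    calc Real.log (1/(x/2)) ≤ Real.log ((1/x)^2) := Real.log_le_log (by positivity) ha
      _ = 2 * L := by rw [Real.log_pow]; push_cast; ring
  have hlow' : -(8/(9*x)) - 4*C*L ≤ Real.log Q := by
    have h1 : Real.log ((p (x/2))^2) ≤ Real.log Q := Real.log_le_log (by positivity) hmono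
    have h2 : Real.log ((p (x/2))^2) = 2 * Real.log (p (x/2)) := by
      rw [Real.log_pow]; push_cast; ring
    have h3 := hplb (x/2) (by linarith) (by linarith)
    have he : 2/(9*(x/2)) = 4/(9*x) := by field_simp; ring
    rw [he] at h3
    have h5 : C * Real.log (1/(x/2)) ≤ C * (2*L) :=
      mul_le_mul_of_nonneg_left h4 hC.le
    have he2 : (8:ℝ)/(9*x) = 2*(4/(9*x)) := by ring
    linarith
  ---- UPPER BOUND ----
  obtain ⟨n, hn⟩ : ∃ m : ℕ, m = ⌈1/x⌉₊ := ⟨_, rfl⟩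
  have hn1 : 0 < n := by rw [hn]; exact Nat.ceil_pos.2 (by positivity)
  have hnposR : (0:ℝ) < n := by exact_mod_cast hn1
  have hnx : 1/x ≤ (n:ℝ) := by rw [hn]; exact Nat.le_ceil _
  have hnx1 : 1 ≤ (n:ℝ) * x := by
    have := (div_le_iff₀ hx).1 hnx
    linarith
  have hnx2 : (n:ℝ) ≤ 2/x := by
    have h1 : (n:ℝ) < 1/x + 1 := by
      rw [hn]; exact Nat.ceil_lt_add_one (show (0:ℝ) ≤ 1/x by positivity)
    have h1x : (1:ℝ) ≤ 1/x := by rw [le_div_iff₀ hx]; linarith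
    have h2x : (1:ℝ)/x + 1 ≤ 2/x := by
      have : (2:ℝ)/x = 1/x + 1/x := by ring
      linarith
    linarith
  have hn2' : (n:ℝ) * x ≤ 2 := by
    have := (le_div_iff₀ hx).1 hnx2
    linarith
  -- a.e. positivity of U₂
  have hpos₂ : ∀ᵐ ω ∂P, 0 < U₂ ω := by
    rw [ae_iff]
    have h0 : P {ω | U₂ ω ≤ 0} = 0 := by
      rw [hidm 0]
      have h1 := hpos
      rw [ae_iff] at h1
      convert h1 using 2
      ext ω; simp [not_lt]
    convert h0 using 2
    ext ω; simp [not_lt]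
  -- covering
  have hcover : {ω | U₁ ω + U₂ ω ≤ x} ≤ᵐ[P]
      ⋃ k ∈ Finset.range n, ({ω | U₁ ω ≤ ((k:ℝ)+1)*x/n} ∩ {ω | U₂ ω ≤ ((n:ℝ)-k)*x/n}) := by
    filter_upwards [hpos, hpos₂] with ω h1 h2 hmem
    have hmem' : U₁ ω + U₂ ω ≤ x := hmem
    set k := ⌊U₁ ω * n / x⌋₊ with hk
    have hu1x : U₁ ω < x := by linarith [hmem']
    have hkn : k < n := by
      rw [hk, Nat.floor_lt (by positivity)]
      rw [div_lt_iff₀ hx]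
      nlinarith
    have hknR : (k:ℝ) < n := by exact_mod_cast hkn
    refine Set.mem_iUnion.2 ⟨k, Set.mem_iUnion.2 ⟨Finset.mem_range.2 hkn, ?_, ?_⟩⟩
    · show U₁ ω ≤ ((k:ℝ)+1)*x/(n:ℝ)
      have hf := Nat.lt_floor_add_one (U₁ ω * n / x)
      rw [le_div_iff₀ hnposR]
      have := (div_lt_iff₀ hx).1 hf
      nlinarith
    · show U₂ ω ≤ ((n:ℝ)-(k:ℝ))*x/(n:ℝ)
      have hfl : (k:ℝ) ≤ U₁ ω * n / x := Nat.floor_le (by positivity)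
      have hkx : (k:ℝ) * x ≤ U₁ ω * n := by
        have := (le_div_iff₀ hx).1 hfl
        linarith
      rw [le_div_iff₀ hnposR]
      nlinarith
  have hQle : P {ω | U₁ ω + U₂ ω ≤ x} ≤ ∑ k ∈ Finset.range n,
      P {ω | U₁ ω ≤ ((k:ℝ)+1)*x/n} * P {ω | U₁ ω ≤ ((n:ℝ)-k)*x/n} := by
    calc P {ω | U₁ ω + U₂ ω ≤ x}
        ≤ P (⋃ k ∈ Finset.range n,
            ({ω | U₁ ω ≤ ((k:ℝ)+1)*x/n} ∩ {ω | U₂ ω ≤ ((n:ℝ)-k)*x/n})) :=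
          measure_mono_ae hcover
      _ ≤ ∑ k ∈ Finset.range n,
            P ({ω | U₁ ω ≤ ((k:ℝ)+1)*x/n} ∩ {ω | U₂ ω ≤ ((n:ℝ)-k)*x/n}) :=
          measure_biUnion_finset_le _ _
      _ = _ := by
          refine Finset.sum_congr rfl fun k _ => ?_
          rw [hprod, hidm]
  have hQle' : Q ≤ ∑ k ∈ Finset.range n, p (((k:ℝ)+1)*x/n) * p (((n:ℝ)-k)*x/n) := by
    have hfin : ∀ k ∈ Finset.range n,
        P {ω | U₁ ω ≤ ((k:ℝ)+1)*x/n} * P {ω | U₁ ω ≤ ((n:ℝ)-k)*x/n} ≠ ⊤ :=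
      fun k _ => ENNReal.mul_ne_top (measure_ne_top P _) (measure_ne_top P _)
    have h1 := ENNReal.toReal_mono (by
        rw [← lt_top_iff_ne_top]
        exact ENNReal.sum_lt_top.2 fun k hk => lt_top_iff_ne_top.2 (hfin k hk)) hQle
    rw [ENNReal.toReal_sum hfin] at h1
    simp only [ENNReal.toReal_mul] at h1
    exact h1
  -- bound on log(1/a) for a ≥ x/n
  have hLog : ∀ a : ℝ, 0 < a → x/(n:ℝ) ≤ a → Real.log (1/a) ≤ 3*L := by
    intro a ha hax
    have h2 : 1/a ≤ (n:ℝ)/x := by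
      rw [div_le_div_iff₀ ha hx]
      have := (div_le_iff₀ hnposR).1 hax
      nlinarith
    have h3 : (n:ℝ)/x ≤ (1/x)^3 := by
      rw [div_pow, one_pow, div_le_div_iff₀ hx (by positivity)]
      have hh1 : (n:ℝ)*x*x^2 ≤ 2*x^2 := mul_le_mul_of_nonneg_right hn2' (sq_nonneg x)
      have hh2 : 2*x^2 ≤ x := by nlinarith
      nlinarith [hh1, hh2]
    calc Real.log (1/a) ≤ Real.log ((1/x)^3) :=
          Real.log_le_log (by positivity) (h2.trans h3)
      _ = 3*L := by rw [Real.log_pow]; push_cast; ring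
  -- per-term bound
  have hterm : ∀ k ∈ Finset.range n, p (((k:ℝ)+1)*x/n) * p (((n:ℝ)-k)*x/n)
      ≤ Real.exp (-(8*n/(9*x*((n:ℝ)+1))) + 6*C*L) := by
    intro k hk
    clear hcover hQle hQle' hsub hpos hpos₂ hprod hidm htb hplb hppos hmono hindep hid hm₁ hm₂
    rw [Finset.mem_range] at hk
    have hknR : (k:ℝ) < n := by exact_mod_cast hk
    obtain ⟨u, hu⟩ : ∃ u : ℝ, u = (k:ℝ)+1 := ⟨_, rfl⟩
    obtain ⟨v, hv⟩ : ∃ v : ℝ, v = (n:ℝ)-(k:ℝ) := ⟨_, rfl⟩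
    rw [show ((k:ℝ)+1) = u from hu.symm, show ((n:ℝ)-(k:ℝ)) = v from hv.symm]
    have hu1 : 1 ≤ u := by
      rw [hu]
      have : (0:ℝ) ≤ (k:ℝ) := Nat.cast_nonneg k
      linarith
    have hu0 : 0 < u := lt_of_lt_of_le one_pos hu1
    have hv0 : 0 < v := by rw [hv]; linarith
    have hv1 : 1 ≤ v := by
      rw [hv]
      have : (k:ℝ)+1 ≤ n := by exact_mod_cast hk
      linarith
    have hun : u ≤ n := by
      rw [hu]; exact_mod_cast hk
    have hvn : v ≤ (n:ℝ) := by
      rw [hv]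
      have : (0:ℝ) ≤ (k:ℝ) := Nat.cast_nonneg k
      linarith
    have ha₁ : 0 < u*x/(n:ℝ) := by positivity
    have ha₂ : 0 < v*x/(n:ℝ) := by positivity
    have ha₁x : u*x/(n:ℝ) ≤ x := by
      rw [div_le_iff₀ hnposR]; nlinarith
    have ha₂x : v*x/(n:ℝ) ≤ x := by
      rw [div_le_iff₀ hnposR]; nlinarith
    have hb₁ := hpub _ ha₁ (lt_of_le_of_lt ha₁x hxa₀)
    have hb₂ := hpub _ ha₂ (lt_of_le_of_lt ha₂x hxa₀)
    have hxn₁ : x/(n:ℝ) ≤ u*x/(n:ℝ) := by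
      rw [div_le_div_iff₀ hnposR hnposR]
      nlinarith [mul_nonneg (mul_nonneg (sub_nonneg.2 hu1) hx.le) hnposR.le]
    have hxn₂ : x/(n:ℝ) ≤ v*x/(n:ℝ) := by
      rw [div_le_div_iff₀ hnposR hnposR]
      nlinarith [mul_nonneg (mul_nonneg (sub_nonneg.2 hv1) hx.le) hnposR.le]
    have hl₁ := hLog _ ha₁ hxn₁
    have hl₂ := hLog _ ha₂ hxn₂
    -- AM-HM
    have huv : u + v = (n:ℝ) + 1 := by rw [hu, hv]; ring
    have key : 4/((n:ℝ)+1) ≤ 1/u + 1/v := by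
      rw [← huv, div_add_div _ _ (ne_of_gt hu0) (ne_of_gt hv0),
        div_le_div_iff₀ (by linarith) (by positivity)]
      nlinarith [sq_nonneg (u-v)]
    have e1 : 2/(9*(u*x/(n:ℝ))) = (2*(n:ℝ)/(9*x)) * (1/u) := by
      field_simp
    have e2 : 2/(9*(v*x/(n:ℝ))) = (2*(n:ℝ)/(9*x)) * (1/v) := by
      field_simp
    have e3 : 8*(n:ℝ)/(9*x*((n:ℝ)+1)) = (2*(n:ℝ)/(9*x)) * (4/((n:ℝ)+1)) := by
      field_simp
      ring
    have hsum : 8*(n:ℝ)/(9*x*((n:ℝ)+1)) ≤ 2/(9*(u*x/(n:ℝ))) + 2/(9*(v*x/(n:ℝ))) := by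
      rw [e1, e2, e3, ← mul_add]
      exact mul_le_mul_of_nonneg_left key (by positivity)
    calc p (u*x/(n:ℝ)) * p (v*x/(n:ℝ))
        ≤ Real.exp (-(2/(9*(u*x/(n:ℝ)))) + C * Real.log (1/(u*x/(n:ℝ)))) *
          Real.exp (-(2/(9*(v*x/(n:ℝ)))) + C * Real.log (1/(v*x/(n:ℝ)))) :=
          mul_le_mul hb₁ hb₂ (hpnn _) (Real.exp_nonneg _)
      _ = Real.exp ((-(2/(9*(u*x/(n:ℝ)))) + C * Real.log (1/(u*x/(n:ℝ)))) +
          (-(2/(9*(v*x/(n:ℝ)))) + C * Real.log (1/(v*x/(n:ℝ))))) := (Real.exp_add _ _).symm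
      _ ≤ Real.exp (-(8*n/(9*x*((n:ℝ)+1))) + 6*C*L) := by
          apply Real.exp_le_exp.2
          have hcl₁ : C * Real.log (1/(u*x/(n:ℝ))) ≤ C * (3*L) :=
            mul_le_mul_of_nonneg_left hl₁ hC.le
          have hcl₂ : C * Real.log (1/(v*x/(n:ℝ))) ≤ C * (3*L) :=
            mul_le_mul_of_nonneg_left hl₂ hC.le
          linarith
  have hsumle : Q ≤ n * Real.exp (-(8*n/(9*x*((n:ℝ)+1))) + 6*C*L) := by
    calc Q ≤ ∑ k ∈ Finset.range n, p (((k:ℝ)+1)*x/n) * p (((n:ℝ)-k)*x/n) := hQle'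
      _ ≤ ∑ _k ∈ Finset.range n, Real.exp (-(8*n/(9*x*((n:ℝ)+1))) + 6*C*L) :=
          Finset.sum_le_sum hterm
      _ = n * Real.exp (-(8*n/(9*x*((n:ℝ)+1))) + 6*C*L) := by
          rw [Finset.sum_const, Finset.card_range, nsmul_eq_mul]
  have hup : Real.log Q ≤ -(8/(9*x)) + (6*C+3)*L := by
    clear hcover hQle hQle' hterm hsub hpos hpos₂ hprod hidm htb hpub hplb hppos hmono hpnn
    have h1 := Real.log_le_log hQpos hsumle
    rw [Real.log_mul (by positivity) (Real.exp_ne_zero _), Real.log_exp] at h1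
    have hlogn : Real.log (n:ℝ) ≤ 2*L := by
      have hle : (n:ℝ) ≤ (1/x)^2 := by
        rw [div_pow, one_pow]
        rw [le_div_iff₀ (by positivity)]
        nlinarith [mul_pos hx (show (0:ℝ) < 1 - 2*x by linarith)]
      calc Real.log (n:ℝ) ≤ Real.log ((1/x)^2) := Real.log_le_log hnposR hle
        _ = 2*L := by rw [Real.log_pow]; push_cast; ring
    have hcorr : -(8*(n:ℝ)/(9*x*((n:ℝ)+1))) ≤ -(8/(9*x)) + L := by
      have he : 8/(9*x) - 8*(n:ℝ)/(9*x*((n:ℝ)+1)) = 8/(9*x*((n:ℝ)+1)) := by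
        field_simp
        ring
      have h2 : 8/(9*x*((n:ℝ)+1)) ≤ 1 := by
        rw [div_le_one (by positivity)]
        nlinarith
      linarith [hL1]
    linarith
  ---- CONCLUSION ----
  clear hcover hQle hQle' hterm hsub hpos hpos₂ hprod hidm htb hpub hplb hppos hpnn hmono hsumle
  rw [abs_le]
  constructor
  · nlinarith [mul_nonneg hC.le hLpos.le]
  · nlinarith [mul_nonneg hC.le hLpos.le]
end

section
/- Suppose a stochastic process $(X_t)_{t\ge0}$ satisfies the scaling property: for every $\lambda > 0$, $(X_{\lambda t})_{t\ge0}$ has the same law as $(\lambda^{2/3} X_t)_{t\ge0}$. Suppose also there exist constants $\kappa>0, C>0$ such that for all $x \ge 2$, $P(\sup_{t\in[0,1]} X_t \ge x) \le C x^C e^{-2\kappa x^3}$. Then for every $\varepsilon > 0$ and every $\lambda > 1$, $\sum_{n\ge1} P\big(\sup_{t\in[0,\lambda^n]} X_t \ge \frac{1+\varepsilon}{(2\kappa)^{1/3}} \lambda^{2n/3}(\ln\ln \lambda^n)^{1/3}\big) < \infty$, and consequently almost surely $\limsup_{t\to\infty} \frac{X_t}{t^{2/3}(\ln\ln t)^{1/3}}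 \le \frac{1+\varepsilon}{(2\kappa)^{1/3}}$. -/
open MeasureTheory ProbabilityTheory Filter

lemma sup_reindex (g : ℝ → ℝ) {L : ℝ} (hL : 0 < L) :
    (⨆ t : Set.Icc (0:ℝ) L, g t.1) = ⨆ s : Set.Icc (0:ℝ) 1, g (L * s.1) := by
  have : Set.range (fun t : Set.Icc (0:ℝ) L => g t.1)
      = Set.range (fun s : Set.Icc (0:ℝ) 1 => g (L * s.1)) := by
    ext y
    constructor
    · rintro ⟨⟨t, ht0, htL⟩, rfl⟩
      exact ⟨⟨t / L, div_nonneg ht0 hL.le, (div_le_one hL).2 htL⟩, by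
        simp [mul_div_cancel₀, hL.ne']⟩
    · rintro ⟨⟨s, hs0, hs1⟩, rfl⟩
      exact ⟨⟨L * s, mul_nonneg hL.le hs0, by nlinarith⟩, rfl⟩
  rw [iSup, iSup, this]

lemma sup_char {f : ℝ → ℝ} (hf : Continuous f) (x : ℝ) :
    (x ≤ ⨆ t : Set.Icc (0:ℝ) 1, f t.1) ↔
      ∀ k : ℕ, ∃ q : ℚ, ((q:ℝ) ∈ Set.Icc (0:ℝ) 1 ∧ x - 1/(k+1) < f q) := by
  have hne : (Set.Icc (0:ℝ) 1).Nonempty := ⟨0, by norm_num⟩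
  have hbdd : BddAbove (Set.range fun t : Set.Icc (0:ℝ) 1 => f t.1) := by
    have := (isCompact_Icc (a := (0:ℝ)) (b := 1)).bddAbove_image hf.continuousOn
    rw [← Set.image_eq_range]
    exact this
  constructor
  · intro hx k
    obtain ⟨t0, ht0, hmax⟩ := (isCompact_Icc (a := (0:ℝ)) (b := 1)).exists_isMaxOn hne
      hf.continuousOn
    have hsle : (⨆ t : Set.Icc (0:ℝ) 1, f t.1) ≤ f t0 := ciSup_le fun t => hmax t.2
    have hxle : x ≤ f t0 := hx.trans hsle
    have hk : (0:ℝ) < 1/(k+1) := by positivity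
    have hcont : ContinuousAt f t0 := hf.continuousAt
    obtain ⟨δ, hδ, hball⟩ := Metric.continuousAt_iff.1 hcont (1/(k+1)) hk
    rcases lt_or_eq_of_le ht0.2 with h1 | h1
    · obtain ⟨q, hq1, hq2⟩ := exists_rat_btwn (lt_min h1 (lt_add_of_pos_right t0 hδ))
      obtain ⟨hq2a, hq2b⟩ := lt_min_iff.1 hq2
      refine ⟨q, ⟨ht0.1.trans hq1.le, hq2a.le⟩, ?_⟩
      have hd : dist (q:ℝ) t0 < δ := by
        rw [Real.dist_eq, abs_lt]
        constructor <;> nlinarith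
      have := hball hd
      rw [Real.dist_eq, abs_lt] at this
      nlinarith
    · obtain ⟨q, hq1, hq2⟩ := exists_rat_btwn (max_lt (by norm_num : (0:ℝ) < 1)
        (by linarith : t0 - δ < 1))
      have hq1a : (0:ℝ) < q := (le_max_left _ _).trans_lt hq1
      have hq1b : t0 - δ < q := (le_max_right _ _).trans_lt hq1
      refine ⟨q, ⟨hq1a.le, hq2.le⟩, ?_⟩
      have hd : dist (q:ℝ) t0 < δ := by
        rw [Real.dist_eq, abs_lt]
        constructor <;> nlinarith
      have := hball hd
      rw [Real.dist_eq, abs_lt] at this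
      nlinarith
  · intro h
    by_contra hx
    push_neg at hx
    obtain ⟨k, hk⟩ := exists_nat_one_div_lt (sub_pos.2 hx)
    obtain ⟨q, hq, hlt⟩ := h k
    have : f q ≤ ⨆ t : Set.Icc (0:ℝ) 1, f t.1 := le_ciSup hbdd ⟨(q:ℝ), hq⟩
    push_cast at hk hlt
    linarith

def Sset (x : ℝ) : Set (ℝ → ℝ) :=
  ⋂ k : ℕ, ⋃ q : ℚ, {f | ((q:ℝ) ∈ Set.Icc (0:ℝ) 1) ∧ x - 1/(k+1) < f q}

lemma Sset_meas (x : ℝ) : MeasurableSet (Sset x) := by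
  refine MeasurableSet.iInter fun k => MeasurableSet.iUnion fun q => ?_
  by_cases hq : (q:ℝ) ∈ Set.Icc (0:ℝ) 1
  · have h : {f : ℝ → ℝ | ((q:ℝ) ∈ Set.Icc (0:ℝ) 1) ∧ x - 1/(k+1) < f q}
        = (fun f : ℝ → ℝ => f (q:ℝ)) ⁻¹' Set.Ioi (x - 1/(k+1)) := by
      ext f; simp [hq]
    rw [h]
    exact (measurable_pi_apply _) measurableSet_Ioi
  · have h : {f : ℝ → ℝ | ((q:ℝ) ∈ Set.Icc (0:ℝ) 1) ∧ x - 1/(k+1) < f q} = ∅ := by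
      ext f; simp [hq]
    rw [h]; exact MeasurableSet.empty

lemma mem_Sset {f : ℝ → ℝ} (hf : Continuous f) (x : ℝ) :
    f ∈ Sset x ↔ x ≤ ⨆ t : Set.Icc (0:ℝ) 1, f t.1 := by
  rw [sup_char hf x]
  simp [Sset, Set.mem_iInter, Set.mem_iUnion]

lemma scale_event {Ω : Type*} {mΩ : MeasurableSpace Ω} (P : Measure Ω)
    (X : ℝ → Ω → ℝ) (hmeas : ∀ t, Measurable (X t))
    (hcont : ∀ ω, Continuous fun t => X t ω)
    (hscale : ∀ lam : ℝ, 0 < lam →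
      Measure.map (fun ω => fun t : ℝ => X (lam * t) ω) P =
        Measure.map (fun ω => fun t : ℝ => lam ^ ((2:ℝ)/3) * X t ω) P)
    {L : ℝ} (hL : 0 < L) (x : ℝ) :
    P {ω | x ≤ ⨆ t : Set.Icc (0:ℝ) L, X t.1 ω}
      = P {ω | x / L ^ ((2:ℝ)/3) ≤ ⨆ t : Set.Icc (0:ℝ) 1, X t.1 ω} := by
  have hLp : 0 < L ^ ((2:ℝ)/3) := Real.rpow_pos_of_pos hL _
  have hm1 : Measurable (fun ω => fun t : ℝ => X (L * t) ω) :=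
    measurable_pi_lambda _ fun t => hmeas (L * t)
  have hm2 : Measurable (fun ω => fun t : ℝ => L ^ ((2:ℝ)/3) * X t ω) :=
    measurable_pi_lambda _ fun t => (hmeas t).const_mul _
  have h1 : {ω | x ≤ ⨆ t : Set.Icc (0:ℝ) L, X t.1 ω}
      = (fun ω => fun t : ℝ => X (L * t) ω) ⁻¹' (Sset x) := by
    ext ω
    have hc : Continuous (fun t : ℝ => X (L * t) ω) :=
      (hcont ω).comp (continuous_const.mul continuous_id)
    simp only [Set.mem_setOf_eq, Set.mem_preimage]
    rw [mem_Sset hc x, sup_reindex (fun t => X t ω) hL]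
  have h2 : {ω | x / L ^ ((2:ℝ)/3) ≤ ⨆ t : Set.Icc (0:ℝ) 1, X t.1 ω}
      = (fun ω => fun t : ℝ => L ^ ((2:ℝ)/3) * X t ω) ⁻¹' (Sset x) := by
    ext ω
    have hc : Continuous (fun t : ℝ => L ^ ((2:ℝ)/3) * X t ω) :=
      continuous_const.mul (hcont ω)
    simp only [Set.mem_setOf_eq, Set.mem_preimage]
    rw [mem_Sset hc x, ← Real.mul_iSup_of_nonneg hLp.le, ← div_le_iff₀' hLp]
  rw [h1, h2, ← Measure.map_apply hm1 (Sset_meas x), ← Measure.map_apply hm2 (Sset_meas x),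
    hscale L hL]

lemma tail_sum {κ ε C lam : ℝ} (hκ : 0 < κ) (hε : 0 < ε) (hC : 0 < C) (hlam : 1 < lam)
    (term : ℕ → ℝ) (hnonneg : ∀ n, 0 ≤ term n) (hbd : ∀ n, term n ≤ 1)
    (hterm : ∀ n : ℕ, 2 ≤ ((1+ε)/(2*κ) ^ ((1:ℝ)/3)) * (Real.log (((n:ℝ)+1) * Real.log lam)) ^ ((1:ℝ)/3) →
      term n ≤ C * (((1+ε)/(2*κ) ^ ((1:ℝ)/3)) * (Real.log (((n:ℝ)+1) * Real.log lam)) ^ ((1:ℝ)/3)) ^ (C:ℝ)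
        * Real.exp (-2 * κ * (((1+ε)/(2*κ) ^ ((1:ℝ)/3)) * (Real.log (((n:ℝ)+1) * Real.log lam)) ^ ((1:ℝ)/3)) ^ 3)) :
    Summable term := by
  set L : ℝ := Real.log lam with hLdef
  have hL : 0 < L := Real.log_pos hlam
  have h2κ : (0:ℝ) < 2 * κ := by linarith
  set c : ℝ := (1+ε)/(2*κ) ^ ((1:ℝ)/3) with hcdef
  have hc : 0 < c := div_pos (by linarith) (Real.rpow_pos_of_pos h2κ _)
  set g : ℕ → ℝ := fun n => Real.log (((n:ℝ)+1) * L) with hgdef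
  set x : ℕ → ℝ := fun n => c * (g n) ^ ((1:ℝ)/3) with hxdef
  set p : ℝ := (1+ε)^3 with hpdef
  set r : ℝ := 3*ε/(2*C) with hrdef
  have hr : 0 < r := by positivity
  have hrC : r * (C/3) = ε/2 := by rw [hrdef]; field_simp
  set e2 : ℝ := r * (C/3) - p + (1+ε) with he2def
  have he2 : e2 < 0 := by
    have hple : (1:ℝ) + 3*ε ≤ p := by nlinarith [sq_nonneg ε, hε.le]
    rw [he2def, hrC]; linarith
  have hy : Tendsto (fun n : ℕ => ((n:ℝ)+1) * L) atTop atTop := by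
    apply Tendsto.atTop_mul_const hL
    exact tendsto_atTop_add_const_right _ _ tendsto_natCast_atTop_atTop
  have hg : Tendsto g atTop atTop := Real.tendsto_log_atTop.comp hy
  have hxx : Tendsto x atTop atTop := by
    apply Tendsto.const_mul_atTop hc
    exact (tendsto_rpow_atTop (by norm_num : (0:ℝ) < 1/3)).comp hg
  have ev1 : ∀ᶠ n : ℕ in atTop, 2 ≤ x n := hxx.eventually_ge_atTop 2
  have ev2 : ∀ᶠ n : ℕ in atTop, 1 ≤ g n := hg.eventually_ge_atTop 1
  have ev3 : ∀ᶠ n : ℕ in atTop, g n ≤ (((n:ℝ)+1) * L) ^ r := by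
    have h := (isLittleO_log_rpow_atTop hr).def (by norm_num : (0:ℝ) < 1)
    filter_upwards [hy.eventually h, ev2] with n hn hn2
    simp only [Real.norm_eq_abs, one_mul] at hn
    calc g n ≤ |g n| := le_abs_self _
      _ ≤ |(((n:ℝ)+1) * L) ^ r| := hn
      _ = (((n:ℝ)+1) * L) ^ r := abs_of_nonneg (Real.rpow_nonneg (by positivity) _)
  have ev4 : ∀ᶠ n : ℕ in atTop,
      C * c ^ (C:ℝ) * L ^ (-(1+ε)) * ((((n:ℝ)+1) * L) ^ e2) ≤ 1 := by
    have h0 : Tendsto (fun n : ℕ => C * c ^ (C:ℝ) * L ^ (-(1+ε)) * ((((n:ℝ)+1) * L) ^ e2))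
        atTop (nhds (C * c ^ (C:ℝ) * L ^ (-(1+ε)) * 0)) := by
      apply Tendsto.const_mul
      have h2 : Tendsto (fun n : ℕ => (((n:ℝ)+1) * L) ^ (-(-e2))) atTop (nhds 0) :=
        (tendsto_rpow_neg_atTop (neg_pos.2 he2)).comp hy
      simpa using h2
    rw [mul_zero] at h0
    exact h0.eventually_le_const (by norm_num)
  have key : ∀ᶠ n : ℕ in atTop, term n ≤ ((n:ℝ)+1) ^ (-(1+ε)) := by
    filter_upwards [ev1, ev2, ev3, ev4] with n h1 h2 h3 h4
    set a : ℝ := (n:ℝ)+1 with hadef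
    have ha0 : (0:ℝ) < a := by positivity
    set y : ℝ := a * L with hydef
    have hy0 : 0 < y := by positivity
    have hg0 : (0:ℝ) ≤ g n := by linarith
    have hcube : ∀ z : ℝ, 0 ≤ z → (z ^ ((1:ℝ)/3)) ^ 3 = z := by
      intro z hz
      rw [← Real.rpow_natCast (z ^ ((1:ℝ)/3)) 3, ← Real.rpow_mul hz]
      norm_num
    have hx3 : x n ^ 3 = p / (2*κ) * g n := by
      have h1' : x n ^ 3 = c ^ 3 * ((g n ^ ((1:ℝ)/3)) ^ 3) := by rw [hxdef]; ring
      rw [h1', hcube _ hg0, hcdef, div_pow, hcube _ h2κ.le, hpdef]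
      try ring
    have hlogy : Real.log y = g n := by rw [hgdef, hydef]
    have hexp : Real.exp (-2 * κ * x n ^ 3) = y ^ (-p) := by
      have heq : -2 * κ * x n ^ 3 = Real.log y * (-p) := by
        rw [hx3, hlogy]; field_simp; try ring
      rw [heq, Real.rpow_def_of_pos hy0]
    have hxC : (x n) ^ (C:ℝ) = c ^ (C:ℝ) * (g n) ^ (C/3) := by
      rw [hxdef]
      rw [Real.mul_rpow hc.le (Real.rpow_nonneg hg0 _)]
      congr 1
      rw [← Real.rpow_mul hg0]
      try congr 1
      try ring
    have hLne : L ^ ((1:ℝ)+ε) ≠ 0 := (Real.rpow_pos_of_pos hL _).ne'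
    have hane : a ^ ((1:ℝ)+ε) ≠ 0 := (Real.rpow_pos_of_pos ha0 _).ne'
    calc term n ≤ C * (x n) ^ (C:ℝ) * Real.exp (-2 * κ * x n ^ 3) := hterm n h1
      _ = C * c ^ (C:ℝ) * (g n) ^ (C/3) * y ^ (-p) := by rw [hxC, hexp]; ring
      _ ≤ C * c ^ (C:ℝ) * (y ^ r) ^ (C/3) * y ^ (-p) := by
          have hstep : (g n) ^ (C/3) ≤ (y ^ r) ^ (C/3) :=
            Real.rpow_le_rpow hg0 h3 (by positivity)
          exact mul_le_mul_of_nonneg_right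
            (mul_le_mul_of_nonneg_left hstep (by positivity))
            (Real.rpow_nonneg hy0.le _)
      _ = C * c ^ (C:ℝ) * L ^ (-(1+ε)) * (y ^ e2) * a ^ (-(1+ε)) := by
          have e1 : (y ^ r) ^ (C/3) = y ^ (r * (C/3)) := (Real.rpow_mul hy0.le _ _).symm
          have e3 : y ^ e2 = y ^ (r * (C/3)) * y ^ (-p) * y ^ ((1:ℝ)+ε) := by
            rw [← Real.rpow_add hy0, ← Real.rpow_add hy0]
            try (congr 1; rw [he2def]; ring)
            try (rw [he2def]; ring)
          have e4 : y ^ ((1:ℝ)+ε) = a ^ ((1:ℝ)+ε) * L ^ ((1:ℝ)+ε) := by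
            rw [hydef, Real.mul_rpow ha0.le hL.le]
          rw [e1, e3, e4, Real.rpow_neg hL.le, Real.rpow_neg ha0.le]
          field_simp
      _ ≤ 1 * a ^ (-(1+ε)) :=
          mul_le_mul_of_nonneg_right h4 (Real.rpow_nonneg ha0.le _)
      _ = ((n:ℝ)+1) ^ (-(1+ε)) := one_mul _
  -- conclude summability
  obtain ⟨N, hN⟩ := eventually_atTop.1 key
  rw [← summable_nat_add_iff N]
  have hsum : Summable (fun n : ℕ => ((n:ℝ) + (N:ℝ) + 1) ^ (-(1+ε))) := by
    have h0 : Summable (fun n : ℕ => (n:ℝ) ^ (-(1+ε))) :=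
      Real.summable_nat_rpow.2 (by linarith)
    have := (summable_nat_add_iff (N+1)).2 h0
    refine this.congr fun n => ?_
    push_cast
    ring_nf
  refine Summable.of_nonneg_of_le (fun n => hnonneg _) (fun n => ?_) hsum
  have h := hN (n + N) (Nat.le_add_left _ _)
  calc term (n + N) ≤ (((n + N : ℕ):ℝ) + 1) ^ (-(1+ε)) := h
    _ = ((n:ℝ) + (N:ℝ) + 1) ^ (-(1+ε)) := by push_cast; ring_nf

lemma limsup_le_of_ev {f : ℝ → ℝ} {B : ℝ} (hB : 0 ≤ B) (h : ∀ᶠ t in atTop, f t ≤ B) :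
    Filter.limsup f atTop ≤ B := by
  rw [limsup_eq]
  by_cases hbd : BddBelow {a : ℝ | ∀ᶠ t in atTop, f t ≤ a}
  · exact csInf_le hbd h
  · rw [Real.sInf_of_not_bddBelow hbd]; exact hB

-- Borel-Cantelli
lemma bc {Ω : Type*} {mΩ : MeasurableSpace Ω} (P : Measure Ω) [IsProbabilityMeasure P]
    (s : ℕ → Set Ω) (h : Summable fun n => (P (s n)).toReal) :
    ∀ᵐ ω ∂P, ∀ᶠ n in atTop, ω ∉ s n := by
  have hne : ∑' n, P (s n) ≠ ⊤ := by
    have heq : ∑' n, P (s n) = ENNReal.ofReal (∑' n, (P (s n)).toReal) := by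
      rw [ENNReal.ofReal_tsum_of_nonneg (fun n => ENNReal.toReal_nonneg) h]
      exact tsum_congr fun n => (ENNReal.ofReal_toReal (measure_ne_top P _)).symm
    rw [heq]
    exact ENNReal.ofReal_ne_top
  have h0 : P (Filter.limsup s atTop) = 0 := measure_limsup_atTop_eq_zero hne
  have : ∀ᵐ ω ∂P, ω ∉ Filter.limsup s atTop := by
    rw [MeasureTheory.ae_iff]
    simpa using h0
  filter_upwards [this] with ω hω
  rw [mem_limsup_iff_frequently_mem] at hω
  exact not_frequently.1 hω

set_option maxHeartbeats 1000000 in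
lemma pointwise_bound {X : ℝ → ℝ} (hcont : Continuous X)
    {κ ε u : ℝ} (hκ : 0 < κ) (hε : 0 < ε) (hu : 1 < u)
    (hu3 : (1 + ε/4) * u^3 = 1 + ε)
    (hev : ∀ᶠ n : ℕ in atTop,
      (⨆ t : Set.Icc (0:ℝ) (u ^ ((n:ℝ)+1)), X t.1)
        < (1 + ε/4) / (2 * κ) ^ ((1:ℝ)/3) * u ^ (2 * ((n:ℝ)+1) / 3)
          * (Real.log (Real.log (u ^ ((n:ℝ)+1)))) ^ ((1:ℝ)/3)) :
    Filter.limsup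
        (fun t : ℝ => X t / (t ^ ((2:ℝ)/3) * (Real.log (Real.log t)) ^ ((1:ℝ)/3)))
        atTop ≤ (1 + ε) / (2 * κ) ^ ((1:ℝ)/3) := by
  have h2κ : (0:ℝ) < (2*κ) ^ ((1:ℝ)/3) := Real.rpow_pos_of_pos (by linarith) _
  set B : ℝ := (1 + ε) / (2 * κ) ^ ((1:ℝ)/3) with hBdef
  have hB : 0 < B := div_pos (by linarith) h2κ
  set c' : ℝ := (1 + ε/4) / (2 * κ) ^ ((1:ℝ)/3) with hc'def
  have hc' : 0 < c' := div_pos (by linarith) h2κ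
  set L : ℝ := Real.log u with hLdef
  have hL : 0 < L := Real.log_pos hu
  have hu0 : (0:ℝ) < u := by linarith
  have hmLtop : Tendsto (fun m : ℕ => Real.log ((m:ℝ) * L)) atTop atTop :=
    Real.tendsto_log_atTop.comp (Tendsto.atTop_mul_const hL tendsto_natCast_atTop_atTop)
  have ev_a : ∀ᶠ m : ℕ in atTop, 1 ≤ Real.log ((m:ℝ) * L) := hmLtop.eventually_ge_atTop 1
  have ev_b : ∀ᶠ m : ℕ in atTop,
      Real.log (((m:ℝ)+1) * L) ≤ u^3 * Real.log ((m:ℝ) * L) := by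
    have hu31 : (0:ℝ) < u^3 - 1 := by nlinarith
    have h2 : ∀ᶠ m : ℕ in atTop, Real.log 2 ≤ (u^3 - 1) * Real.log ((m:ℝ) * L) := by
      have := (hmLtop.const_mul_atTop hu31).eventually_ge_atTop (Real.log 2)
      simpa using this
    filter_upwards [h2, eventually_ge_atTop 1] with m hm hm1
    have hm0 : (1:ℝ) ≤ (m:ℝ) := by exact_mod_cast hm1
    have hstep : Real.log (((m:ℝ)+1) * L) ≤ Real.log 2 + Real.log ((m:ℝ) * L) := by
      have h1 : ((m:ℝ)+1) * L ≤ 2 * ((m:ℝ) * L) := by nlinarith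
      have h2' := Real.log_le_log (by positivity) h1
      have h3 : Real.log (2 * ((m:ℝ) * L)) = Real.log 2 + Real.log ((m:ℝ) * L) :=
        Real.log_mul two_ne_zero (ne_of_gt (by positivity))
      linarith
    linarith
  obtain ⟨M0, hM0⟩ := eventually_atTop.1 (ev_a.and ev_b)
  obtain ⟨N, hN⟩ := eventually_atTop.1 hev
  set M : ℕ := max (max M0 N) 1 with hMdef
  refine limsup_le_of_ev hB.le ?_
  filter_upwards [eventually_ge_atTop (Real.exp ((M:ℝ) * L)), eventually_gt_atTop 0]
    with t ht ht0
  set m : ℕ := ⌊Real.log t / L⌋₊ with hmdef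
  have hlogt : (M:ℝ) * L ≤ Real.log t := by
    have := Real.log_le_log (Real.exp_pos _) ht
    rwa [Real.log_exp] at this
  have hMm : M ≤ m := by
    rw [hmdef]
    apply Nat.le_floor
    rw [le_div_iff₀ hL]
    exact hlogt
  have hm1 : (1:ℝ) ≤ (m:ℝ) := by
    exact_mod_cast le_trans (le_max_right _ 1) hMm
  have hm2 : (m:ℝ) * L ≤ Real.log t := by
    have hfl := Nat.floor_le (div_nonneg (le_trans (by positivity) hlogt) hL.le)
    calc (m:ℝ) * L ≤ (Real.log t / L) * L := mul_le_mul_of_nonneg_right hfl hL.le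
      _ = Real.log t := by field_simp
  have hm3 : Real.log t ≤ ((m:ℝ)+1) * L := by
    have hfl := (Nat.lt_floor_add_one (Real.log t / L)).le
    calc Real.log t = (Real.log t / L) * L := by field_simp
      _ ≤ ((m:ℝ)+1) * L := mul_le_mul_of_nonneg_right hfl hL.le
  have hup : t ≤ u ^ ((m:ℝ)+1) := by
    rw [Real.rpow_def_of_pos hu0]
    calc t = Real.exp (Real.log t) := (Real.exp_log ht0).symm
      _ ≤ Real.exp (Real.log u * ((m:ℝ)+1)) := by
          apply Real.exp_le_exp.2
          rw [hLdef] at hm3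
          linarith [hm3]
  have hdown : u ^ ((m:ℝ)) ≤ t := by
    rw [Real.rpow_def_of_pos hu0]
    calc Real.exp (Real.log u * (m:ℝ)) ≤ Real.exp (Real.log t) := by
          apply Real.exp_le_exp.2
          rw [hLdef] at hm2
          linarith [hm2]
      _ = t := Real.exp_log ht0
  obtain ⟨hca, hcb⟩ := hM0 m (le_trans (le_trans (le_max_left _ _) (le_max_left _ 1)) hMm)
  have hsup := hN m (le_trans (le_trans (le_max_right _ _) (le_max_left _ 1)) hMm)
  have hlmL : (0:ℝ) < (m:ℝ) * L := by positivity
  have hloglog : Real.log (Real.log (u ^ ((m:ℝ)+1))) = Real.log (((m:ℝ)+1) * L) := by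
    rw [Real.log_rpow hu0]
  have hbddX : BddAbove (Set.range fun t' : Set.Icc (0:ℝ) (u ^ ((m:ℝ)+1)) => X t'.1) := by
    have := (isCompact_Icc (a := (0:ℝ)) (b := u ^ ((m:ℝ)+1))).bddAbove_image hcont.continuousOn
    rw [← Set.image_eq_range]
    exact this
  have hXle : X t ≤ ⨆ t' : Set.Icc (0:ℝ) (u ^ ((m:ℝ)+1)), X t'.1 :=
    le_ciSup hbddX ⟨t, ht0.le, hup⟩
  have hnum : X t < c' * u ^ (2 * ((m:ℝ)+1) / 3) * (Real.log (((m:ℝ)+1) * L)) ^ ((1:ℝ)/3) := by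
    rw [← hloglog]
    exact lt_of_le_of_lt hXle hsup
  -- denominator bounds
  have hDen1 : u ^ (2 * (m:ℝ) / 3) ≤ t ^ ((2:ℝ)/3) := by
    calc u ^ (2 * (m:ℝ) / 3) = (u ^ ((m:ℝ))) ^ ((2:ℝ)/3) := by
          rw [← Real.rpow_mul hu0.le]; congr 1; ring
      _ ≤ t ^ ((2:ℝ)/3) := Real.rpow_le_rpow (Real.rpow_nonneg hu0.le _) hdown (by norm_num)
  have hllt : Real.log ((m:ℝ) * L) ≤ Real.log (Real.log t) :=
    Real.log_le_log hlmL hm2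
  have hDen2 : (Real.log ((m:ℝ) * L)) ^ ((1:ℝ)/3) ≤ (Real.log (Real.log t)) ^ ((1:ℝ)/3) :=
    Real.rpow_le_rpow (by linarith) hllt (by norm_num)
  have hllpos : (0:ℝ) < Real.log (Real.log t) := by linarith
  have hDpos : (0:ℝ) < t ^ ((2:ℝ)/3) * (Real.log (Real.log t)) ^ ((1:ℝ)/3) := by
    have h1 : (0:ℝ) < t ^ ((2:ℝ)/3) := Real.rpow_pos_of_pos ht0 _
    have h2 : (0:ℝ) < (Real.log (Real.log t)) ^ ((1:ℝ)/3) := Real.rpow_pos_of_pos hllpos _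
    positivity
  -- constant inequality
  have h23 : u ^ ((2:ℝ)/3) ≤ u := by
    calc u ^ ((2:ℝ)/3) ≤ u ^ (1:ℝ) := Real.rpow_le_rpow_of_exponent_le hu.le (by norm_num)
      _ = u := Real.rpow_one u
  have hconst : c' * u ^ ((2:ℝ)/3) * u ≤ B := by
    have hu23 : (0:ℝ) < u ^ ((2:ℝ)/3) := Real.rpow_pos_of_pos hu0 _
    calc c' * u ^ ((2:ℝ)/3) * u ≤ c' * u * u := by
          apply mul_le_mul_of_nonneg_right _ hu0.le
          exact mul_le_mul_of_nonneg_left h23 hc'.le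
      _ ≤ c' * u^3 := by
          nlinarith [mul_nonneg (mul_nonneg hc'.le (sq_nonneg u)) (sub_nonneg.2 hu.le)]
      _ = B := by
          rw [hc'def, hBdef, div_mul_eq_mul_div, hu3]
  have hratio : (Real.log (((m:ℝ)+1) * L)) ^ ((1:ℝ)/3)
      ≤ u * (Real.log ((m:ℝ) * L)) ^ ((1:ℝ)/3) := by
    have hple : Real.log (((m:ℝ)+1) * L) ≤ u^3 * Real.log ((m:ℝ) * L) := hcb
    have h0le : (0:ℝ) ≤ Real.log (((m:ℝ)+1) * L) := by
      have hstep2 : (m:ℝ) * L ≤ ((m:ℝ)+1) * L := by linarith [hL.le]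
      have := Real.log_le_log hlmL hstep2
      linarith
    calc (Real.log (((m:ℝ)+1) * L)) ^ ((1:ℝ)/3)
        ≤ (u^3 * Real.log ((m:ℝ) * L)) ^ ((1:ℝ)/3) :=
          Real.rpow_le_rpow h0le hple (by norm_num)
      _ = (u^3) ^ ((1:ℝ)/3) * (Real.log ((m:ℝ) * L)) ^ ((1:ℝ)/3) :=
          Real.mul_rpow (by positivity) (by linarith)
      _ = u * (Real.log ((m:ℝ) * L)) ^ ((1:ℝ)/3) := by
          congr 1
          rw [← Real.rpow_natCast u 3, ← Real.rpow_mul hu0.le]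
          norm_num
  have hsplit : u ^ (2 * ((m:ℝ)+1) / 3) = u ^ (2 * (m:ℝ) / 3) * u ^ ((2:ℝ)/3) := by
    rw [← Real.rpow_add hu0]; congr 1; ring
  -- main chain
  have hmain : X t ≤ B * (t ^ ((2:ℝ)/3) * (Real.log (Real.log t)) ^ ((1:ℝ)/3)) := by
    have hpow : (0:ℝ) < u ^ (2 * (m:ℝ) / 3) := Real.rpow_pos_of_pos hu0 _
    have hlognn : (0:ℝ) ≤ (Real.log ((m:ℝ) * L)) ^ ((1:ℝ)/3) := Real.rpow_nonneg (by linarith) _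
    have key : c' * u ^ (2 * ((m:ℝ)+1) / 3) * (Real.log (((m:ℝ)+1) * L)) ^ ((1:ℝ)/3)
        ≤ B * (u ^ (2 * (m:ℝ) / 3) * (Real.log ((m:ℝ) * L)) ^ ((1:ℝ)/3)) := by
      calc c' * u ^ (2 * ((m:ℝ)+1) / 3) * (Real.log (((m:ℝ)+1) * L)) ^ ((1:ℝ)/3)
          ≤ c' * u ^ (2 * ((m:ℝ)+1) / 3) * (u * (Real.log ((m:ℝ) * L)) ^ ((1:ℝ)/3)) := by
            apply mul_le_mul_of_nonneg_left hratio (by positivity)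
        _ = (c' * u ^ ((2:ℝ)/3) * u) * (u ^ (2 * (m:ℝ) / 3) * (Real.log ((m:ℝ) * L)) ^ ((1:ℝ)/3)) := by
            rw [hsplit]; ring
        _ ≤ B * (u ^ (2 * (m:ℝ) / 3) * (Real.log ((m:ℝ) * L)) ^ ((1:ℝ)/3)) := by
            apply mul_le_mul_of_nonneg_right hconst (by positivity)
    have hDle : u ^ (2 * (m:ℝ) / 3) * (Real.log ((m:ℝ) * L)) ^ ((1:ℝ)/3)
        ≤ t ^ ((2:ℝ)/3) * (Real.log (Real.log t)) ^ ((1:ℝ)/3) := by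
      apply mul_le_mul hDen1 hDen2 hlognn (Real.rpow_nonneg ht0.le _)
    calc X t ≤ c' * u ^ (2 * ((m:ℝ)+1) / 3) * (Real.log (((m:ℝ)+1) * L)) ^ ((1:ℝ)/3) := hnum.le
      _ ≤ B * (u ^ (2 * (m:ℝ) / 3) * (Real.log ((m:ℝ) * L)) ^ ((1:ℝ)/3)) := key
      _ ≤ B * (t ^ ((2:ℝ)/3) * (Real.log (Real.log t)) ^ ((1:ℝ)/3)) :=
          mul_le_mul_of_nonneg_left hDle hB.le
  rw [div_le_iff₀ hDpos]
  linarith [hmain]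

lemma part1 {Ω : Type*} {mΩ : MeasurableSpace Ω}
    (P : Measure Ω) [IsProbabilityMeasure P]
    (X : ℝ → Ω → ℝ) (hmeas : ∀ t, Measurable (X t))
    (hcont : ∀ ω, Continuous fun t => X t ω)
    (hscale : ∀ lam : ℝ, 0 < lam →
      Measure.map (fun ω => fun t : ℝ => X (lam * t) ω) P =
        Measure.map (fun ω => fun t : ℝ => lam ^ ((2:ℝ)/3) * X t ω) P)
    (κ : ℝ) (hκ : 0 < κ)
    (htail : ∃ C > (0:ℝ), ∀ x : ℝ, 2 ≤ x →
      (P {ω | x ≤ ⨆ t : Set.Icc (0:ℝ) 1, X t.1 ω}).toReal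
        ≤ C * x ^ (C:ℝ) * Real.exp (-2 * κ * x ^ 3)) :
    ∀ ε > (0:ℝ), ∀ lam : ℝ, 1 < lam →
      Summable (fun n : ℕ =>
        (P {ω | (1 + ε) / (2 * κ) ^ ((1:ℝ)/3) * lam ^ (2 * ((n:ℝ)+1) / 3)
              * (Real.log (Real.log (lam ^ ((n:ℝ)+1)))) ^ ((1:ℝ)/3)
            ≤ ⨆ t : Set.Icc (0:ℝ) (lam ^ ((n:ℝ)+1)), X t.1 ω}).toReal) := by
  intro ε hε lam hlam
  obtain ⟨C, hC, htl⟩ := htail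
  have hlam0 : (0:ℝ) < lam := by linarith
  set c : ℝ := (1+ε)/(2*κ) ^ ((1:ℝ)/3) with hcdef
  set x : ℕ → ℝ := fun n => c * (Real.log (((n:ℝ)+1) * Real.log lam)) ^ ((1:ℝ)/3) with hxdef
  have hEq : ∀ n : ℕ,
      P {ω | (1 + ε) / (2 * κ) ^ ((1:ℝ)/3) * lam ^ (2 * ((n:ℝ)+1) / 3)
              * (Real.log (Real.log (lam ^ ((n:ℝ)+1)))) ^ ((1:ℝ)/3)
            ≤ ⨆ t : Set.Icc (0:ℝ) (lam ^ ((n:ℝ)+1)), X t.1 ω}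
        = P {ω | x n ≤ ⨆ t : Set.Icc (0:ℝ) 1, X t.1 ω} := by
    intro n
    have hLpos : (0:ℝ) < lam ^ ((n:ℝ)+1) := Real.rpow_pos_of_pos hlam0 _
    rw [scale_event P X hmeas hcont hscale hLpos]
    congr 1
    ext ω
    have hA : (lam ^ ((n:ℝ)+1)) ^ ((2:ℝ)/3) = lam ^ (2 * ((n:ℝ)+1) / 3) := by
      rw [← Real.rpow_mul hlam0.le]
      congr 1
      ring
    have hlog : Real.log (lam ^ ((n:ℝ)+1)) = ((n:ℝ)+1) * Real.log lam :=
      Real.log_rpow hlam0 _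
    have hAne : (lam ^ (2 * ((n:ℝ)+1) / 3)) ≠ 0 := (Real.rpow_pos_of_pos hlam0 _).ne'
    simp only [Set.mem_setOf_eq]
    rw [hA, hlog, hxdef]
    rw [show c * lam ^ (2 * ((n:ℝ)+1) / 3) * (Real.log (((n:ℝ)+1) * Real.log lam)) ^ ((1:ℝ)/3)
          / lam ^ (2 * ((n:ℝ)+1) / 3)
        = c * (Real.log (((n:ℝ)+1) * Real.log lam)) ^ ((1:ℝ)/3) by
      field_simp]
  apply tail_sum hκ hε hC hlam
  · intro n; exact ENNReal.toReal_nonneg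
  · intro n
    exact ENNReal.toReal_mono (by norm_num) prob_le_one
  · intro n h2
    rw [hEq n]
    exact htl (x n) h2

/-- for a process with the `2/3`-scaling property and tail bound
`P(sup_{[0,1]} X ≥ x) ≤ C x^C e^{-2κx³}`, the Borel–Cantelli series along `λⁿ`
converges, and a.s. `limsup_{t→∞} X_t / (t^{2/3}(ln ln t)^{1/3}) ≤ (1+ε)/(2κ)^{1/3}`. -/
theorem stmt_6 {Ω : Type*} {mΩ : MeasurableSpace Ω}
    (P : Measure Ω) [IsProbabilityMeasure P]
    (X : ℝ → Ω → ℝ) (hmeas : ∀ t, Measurable (X t))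
    (hcont : ∀ ω, Continuous fun t => X t ω)
    (hscale : ∀ lam : ℝ, 0 < lam →
      Measure.map (fun ω => fun t : ℝ => X (lam * t) ω) P =
        Measure.map (fun ω => fun t : ℝ => lam ^ ((2:ℝ)/3) * X t ω) P)
    (κ : ℝ) (hκ : 0 < κ)
    (htail : ∃ C > (0:ℝ), ∀ x : ℝ, 2 ≤ x →
      (P {ω | x ≤ ⨆ t : Set.Icc (0:ℝ) 1, X t.1 ω}).toReal
        ≤ C * x ^ (C:ℝ) * Real.exp (-2 * κ * x ^ 3)) :
    (∀ ε > (0:ℝ), ∀ lam : ℝ, 1 < lam →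
      Summable (fun n : ℕ =>
        (P {ω | (1 + ε) / (2 * κ) ^ ((1:ℝ)/3) * lam ^ (2 * ((n:ℝ)+1) / 3)
              * (Real.log (Real.log (lam ^ ((n:ℝ)+1)))) ^ ((1:ℝ)/3)
            ≤ ⨆ t : Set.Icc (0:ℝ) (lam ^ ((n:ℝ)+1)), X t.1 ω}).toReal)) ∧
    (∀ ε > (0:ℝ), ∀ᵐ ω ∂P,
      Filter.limsup
        (fun t : ℝ => X t ω / (t ^ ((2:ℝ)/3) * (Real.log (Real.log t)) ^ ((1:ℝ)/3)))
        atTop ≤ (1 + ε) / (2 * κ) ^ ((1:ℝ)/3)) := by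
  have h1 := part1 P X hmeas hcont hscale κ hκ htail
  refine ⟨h1, ?_⟩
  intro ε hε
  have hR : 1 < (1+ε)/(1+ε/4) := by
    rw [lt_div_iff₀ (by linarith)]; linarith
  set u : ℝ := ((1+ε)/(1+ε/4)) ^ ((1:ℝ)/3) with hudef
  have hu : 1 < u :=
    (Real.one_lt_rpow_iff_of_pos (by linarith)).2 (Or.inl ⟨hR, by norm_num⟩)
  have hu3 : (1+ε/4) * u^3 = 1+ε := by
    have h3 : u^3 = (1+ε)/(1+ε/4) := by
      rw [hudef, ← Real.rpow_natCast (((1+ε)/(1+ε/4)) ^ ((1:ℝ)/3)) 3,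
        ← Real.rpow_mul (by positivity)]
      norm_num
    rw [h3]
    field_simp
  have hsum := h1 (ε/4) (by linarith) u hu
  have hbc := bc P _ hsum
  filter_upwards [hbc] with ω hω
  apply pointwise_bound (hcont ω) hκ hε hu hu3
  filter_upwards [hω] with n hn
  exact lt_of_not_ge fun h => hn h
end

section
/- Suppose there exist constants $c_1, c_2 > 0$ and $C$ such that for all large $h$: $P(\sup_{t\in[0,1]} H_t \ge h) \le e^{-c_1 h^{3/2}}$, and the process $H$ satisfies the scaling property $(H_{\lambda t})_{t\ge0} \overset{d}{=} (\lambda^{1/3} H_t)_{t\ge0}$ for all $\lambda > 0$. Then there exists a constant $\tilde{l} < \infty$ such that almost surely $\limsup_{t\to\infty} \frac{H_t}{t^{1/3}(\ln\ln t)^{2/3}} \le \tilde{l}$. -/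
set_option maxHeartbeats 1000000

open MeasureTheory ProbabilityTheory Filter

noncomputable section

namespace Stmt16Aux

/-- rationals in `[0,1]`, as a subset of `ℝ`. -/
def D : Set ℝ := Set.Icc 0 1 ∩ Set.range ((↑) : ℚ → ℝ)

lemma D_countable : D.Countable :=
  Set.Countable.mono Set.inter_subset_right (Set.countable_range _)

instance : Countable D := D_countable.to_subtype

lemma zero_mem_D : (0 : ℝ) ∈ D :=
  ⟨Set.left_mem_Icc.2 zero_le_one, ⟨0, by norm_num⟩⟩

instance : Nonempty D := ⟨⟨0, zero_mem_D⟩⟩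

instance : Nonempty (Set.Icc (0:ℝ) 1) := ⟨⟨0, Set.left_mem_Icc.2 zero_le_one⟩⟩

lemma bddD (g : ℝ → ℝ) (hg : Continuous g) :
    BddAbove (Set.range fun q : D => g (q : ℝ)) := by
  obtain ⟨C, hC⟩ := (isCompact_Icc.image_of_continuousOn (s := Set.Icc (0:ℝ) 1)
    hg.continuousOn).bddAbove
  refine ⟨C, ?_⟩
  rintro x ⟨⟨q, hq⟩, rfl⟩
  exact hC (Set.mem_image_of_mem g hq.1)

lemma bddI (g : ℝ → ℝ) (hg : Continuous g) :
    BddAbove (Set.range fun t : Set.Icc (0:ℝ) 1 => g (t : ℝ)) := by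
  obtain ⟨C, hC⟩ := (isCompact_Icc.image_of_continuousOn (s := Set.Icc (0:ℝ) 1)
    hg.continuousOn).bddAbove
  refine ⟨C, ?_⟩
  rintro x ⟨⟨t, ht⟩, rfl⟩
  exact hC (Set.mem_image_of_mem g ht)

lemma supD (g : ℝ → ℝ) (hg : Continuous g) :
    (⨆ t : Set.Icc (0:ℝ) 1, g (t : ℝ)) = ⨆ q : D, g (q : ℝ) := by
  refine le_antisymm ?_ ?_
  · refine ciSup_le ?_
    rintro ⟨t, ht⟩
    refine le_of_forall_pos_le_add fun ε hε => ?_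
    obtain ⟨δ, hδ, hδ'⟩ := Metric.continuous_iff.1 hg t ε hε
    obtain ⟨q, hq, hqd⟩ : ∃ q : ℝ, q ∈ D ∧ dist q t < δ := by
      rcases lt_or_eq_of_le ht.2 with h1 | h1
      · obtain ⟨r, hr1, hr2⟩ := exists_rat_btwn (lt_min h1 (lt_add_of_pos_right t hδ))
        have hr2a : (r : ℝ) < 1 := hr2.trans_le (min_le_left _ _)
        have hr2b : (r : ℝ) < t + δ := hr2.trans_le (min_le_right _ _)
        refine ⟨(r : ℝ), ⟨⟨ht.1.trans hr1.le, hr2a.le⟩, ⟨r, rfl⟩⟩, ?_⟩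
        rw [Real.dist_eq, abs_of_pos (sub_pos.2 hr1)]
        linarith
      · refine ⟨1, ⟨Set.right_mem_Icc.2 zero_le_one, ⟨1, by norm_num⟩⟩, ?_⟩
        simp [Real.dist_eq, h1, hδ]
    have hgq := hδ' q hqd
    rw [Real.dist_eq] at hgq
    have h1 : g t - g q ≤ |g q - g t| := by
      rw [abs_sub_comm]; exact le_abs_self _
    have h2 : g q ≤ ⨆ q : D, g (q : ℝ) := le_ciSup (bddD g hg) ⟨q, hq⟩
    linarith
  · refine ciSup_le ?_
    rintro ⟨q, hq⟩
    exact le_ciSup (bddI g hg) ⟨q, hq.1⟩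

end Stmt16Aux

end

open Stmt16Aux

/-- from the tail bound `P(sup_{[0,1]} H ≥ h) ≤ e^{-c₁ h^{3/2}}` and the
`1/3`-scaling property, a.s. `limsup_{t→∞} H_t / (t^{1/3}(ln ln t)^{2/3}) ≤ l̃ < ∞`. -/
theorem stmt_16 {Ω : Type*} {mΩ : MeasurableSpace Ω}
    (P : Measure Ω) [IsProbabilityMeasure P]
    (H : ℝ → Ω → ℝ) (hmeas : ∀ t, Measurable (H t))
    (hcont : ∀ ω, Continuous fun t => H t ω)
    (c₁ : ℝ) (hc₁ : 0 < c₁)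
    (htail : ∀ᶠ h in atTop,
      (P {ω | h ≤ ⨆ t : Set.Icc (0:ℝ) 1, H t.1 ω}).toReal
        ≤ Real.exp (-c₁ * h ^ ((3:ℝ)/2)))
    (hscale : ∀ lam : ℝ, 0 < lam →
      Measure.map (fun ω => fun t : ℝ => H (lam * t) ω) P =
        Measure.map (fun ω => fun t : ℝ => lam ^ ((1:ℝ)/3) * H t ω) P) :
    ∃ l : ℝ, ∀ᵐ ω ∂P,
      Filter.limsup
        (fun t : ℝ => H t ω / (t ^ ((1:ℝ)/3) * (Real.log (Real.log t)) ^ ((2:ℝ)/3)))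
        atTop ≤ l := by
  classical
  set K : ℝ := (2 / c₁) ^ ((2:ℝ)/3) with hKdef
  have hK : 0 < K := by positivity
  set g : ℕ → ℝ := fun n => K * (Real.log n) ^ ((2:ℝ)/3) with hgdef
  -- the scaling identity, applied to a measurable functional of countably many coordinates
  have key : ∀ lam b : ℝ, 0 < lam →
      P {ω | b ≤ ⨆ q : D, H (lam * q) ω}
        = P {ω | b ≤ lam ^ ((1:ℝ)/3) * ⨆ q : D, H q ω} := by
    intro lam b hlam
    have hS : MeasurableSet {f : ℝ → ℝ | b ≤ ⨆ q : D, f (q : ℝ)} :=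
      measurableSet_le measurable_const (Measurable.iSup fun q : D => measurable_pi_apply (q:ℝ))
    have hm1 : Measurable (fun ω => fun t : ℝ => H (lam * t) ω) :=
      measurable_pi_lambda _ fun t => hmeas _
    have hm2 : Measurable (fun ω => fun t : ℝ => lam ^ ((1:ℝ)/3) * H t ω) :=
      measurable_pi_lambda _ fun t => (hmeas t).const_mul _
    have h := congrArg
      (fun μ : Measure (ℝ → ℝ) => μ {f : ℝ → ℝ | b ≤ ⨆ q : D, f (q : ℝ)})
      (hscale lam hlam)
    simp only [Measure.map_apply hm1 hS, Measure.map_apply hm2 hS] at h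
    have e2 : (fun ω => fun t : ℝ => lam ^ ((1:ℝ)/3) * H t ω) ⁻¹'
        {f : ℝ → ℝ | b ≤ ⨆ q : D, f (q : ℝ)}
        = {ω | b ≤ lam ^ ((1:ℝ)/3) * ⨆ q : D, H q ω} := by
      ext ω
      simp only [Set.mem_preimage, Set.mem_setOf_eq]
      rw [Real.mul_iSup_of_nonneg (le_of_lt (Real.rpow_pos_of_pos hlam _))]
    rw [e2] at h
    exact h
  -- choose `N₀`
  obtain ⟨h₀, hh₀⟩ := eventually_atTop.1 htail
  have hgtend : Tendsto g atTop atTop := by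
    have h1 : Tendsto (fun n : ℕ => Real.log n) atTop atTop :=
      Real.tendsto_log_atTop.comp tendsto_natCast_atTop_atTop
    have h2 : Tendsto (fun x : ℝ => x ^ ((2:ℝ)/3)) atTop atTop :=
      tendsto_rpow_atTop (by norm_num)
    exact (h2.comp h1).const_mul_atTop hK
  obtain ⟨N₀, hN₀⟩ := eventually_atTop.1
    ((hgtend.eventually_ge_atTop h₀).and (eventually_ge_atTop 3))
  -- the events
  set E : ℕ → Set Ω := fun n =>
    {ω | (Real.exp n) ^ ((1:ℝ)/3) * g n ≤ ⨆ q : D, H (Real.exp n * q) ω} with hEdef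
  -- tail bound for `E n`, `n ≥ N₀`
  have hEbound : ∀ n : ℕ, N₀ ≤ n → P (E n) ≤ ENNReal.ofReal (((n:ℝ) ^ 2)⁻¹) := by
    intro n hn
    obtain ⟨hgn, h3n⟩ := hN₀ n hn
    have hn1 : (1:ℝ) ≤ (n:ℝ) := by exact_mod_cast le_trans (by norm_num) h3n
    have hlogn : 0 ≤ Real.log n := Real.log_nonneg hn1
    have hc : 0 < (Real.exp n) ^ ((1:ℝ)/3) := Real.rpow_pos_of_pos (Real.exp_pos _) _
    have h1 : P (E n) = P {ω | g n ≤ ⨆ q : D, H q ω} := by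
      simp only [hEdef]
      rw [key (Real.exp n) ((Real.exp n) ^ ((1:ℝ)/3) * g n) (Real.exp_pos _)]
      congr 1
      ext ω
      simp only [Set.mem_setOf_eq]
      exact mul_le_mul_iff_right₀ hc
    have h2 : {ω | g n ≤ ⨆ q : D, H q ω}
        = {ω | g n ≤ ⨆ t : Set.Icc (0:ℝ) 1, H t.1 ω} := by
      ext ω
      simp only [Set.mem_setOf_eq]
      rw [supD (fun t => H t ω) (hcont ω)]
    have h3 := hh₀ (g n) hgn
    have h4 : P (E n) ≠ ⊤ := measure_ne_top _ _
    have h5 : (P (E n)).toReal ≤ Real.exp (-c₁ * (g n) ^ ((3:ℝ)/2)) := by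
      rw [h1, h2]; exact h3
    have h6 : Real.exp (-c₁ * (g n) ^ ((3:ℝ)/2)) = ((n:ℝ) ^ 2)⁻¹ := by
      have hgn' : (g n) ^ ((3:ℝ)/2) = (2 / c₁) * Real.log n := by
        rw [hgdef]
        rw [Real.mul_rpow (le_of_lt hK) (Real.rpow_nonneg hlogn _)]
        rw [hKdef, ← Real.rpow_mul (by positivity), ← Real.rpow_mul hlogn]
        norm_num
      rw [hgn']
      have : -c₁ * ((2 / c₁) * Real.log n) = Real.log n * (-2 : ℝ) := by
        field_simp
      rw [this, ← Real.rpow_def_of_pos (by linarith : (0:ℝ) < (n:ℝ))]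
      rw [Real.rpow_neg (by linarith), ← Real.rpow_natCast (n:ℝ) 2]
      norm_num
    calc P (E n) = ENNReal.ofReal ((P (E n)).toReal) := (ENNReal.ofReal_toReal h4).symm
      _ ≤ ENNReal.ofReal (((n:ℝ) ^ 2)⁻¹) := by
          exact ENNReal.ofReal_le_ofReal (h6 ▸ h5)
  -- Borel–Cantelli for the shifted sequence
  have hsum : (∑' k : ℕ, P (E (k + N₀))) ≠ ⊤ := by
    have hN₀3 : 3 ≤ N₀ := (hN₀ N₀ le_rfl).2
    have hsummable : Summable (fun k : ℕ => (((k + N₀ : ℕ):ℝ) ^ 2)⁻¹) := by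
      have : Summable (fun n : ℕ => ((n:ℝ) ^ 2)⁻¹) :=
        Real.summable_nat_pow_inv.2 (by norm_num)
      exact (summable_nat_add_iff N₀).2 this
    have hle : (∑' k : ℕ, P (E (k + N₀)))
        ≤ ∑' k : ℕ, ENNReal.ofReal ((((k + N₀ : ℕ):ℝ) ^ 2)⁻¹) :=
      ENNReal.tsum_le_tsum fun k => hEbound _ (Nat.le_add_left _ _)
    refine ne_top_of_le_ne_top ?_ hle
    rw [← ENNReal.ofReal_tsum_of_nonneg (fun k => by positivity) hsummable]
    exact ENNReal.ofReal_ne_top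
  have hae := MeasureTheory.ae_eventually_notMem (μ := P) hsum
  -- the constant
  refine ⟨(Real.exp 1) ^ ((1:ℝ)/3) * K * 2 ^ ((2:ℝ)/3), ?_⟩
  filter_upwards [hae] with ω hω
  set l : ℝ := (Real.exp 1) ^ ((1:ℝ)/3) * K * 2 ^ ((2:ℝ)/3) with hldef
  have hlpos : 0 < l := by positivity
  obtain ⟨k₀, hk₀⟩ := eventually_atTop.1 hω
  have hnotE : ∀ n : ℕ, k₀ + N₀ ≤ n → ω ∉ E n := by
    intro n hn
    have h1 : k₀ ≤ n - N₀ := by omega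
    have h2 : (n - N₀) + N₀ = n := by omega
    have := hk₀ (n - N₀) h1
    rwa [h2] at this
  -- eventual bound on the ratio
  have hev : ∀ᶠ t : ℝ in atTop,
      H t ω / (t ^ ((1:ℝ)/3) * (Real.log (Real.log t)) ^ ((2:ℝ)/3)) ≤ l := by
    filter_upwards [eventually_ge_atTop (Real.exp (max ((k₀ + N₀ : ℕ):ℝ) 2))] with t ht
    have htpos : 0 < t := lt_of_lt_of_le (Real.exp_pos _) ht
    have hlogt : max ((k₀ + N₀ : ℕ):ℝ) 2 ≤ Real.log t :=
      (Real.le_log_iff_exp_le htpos).2 ht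
    have hlogt2 : 2 ≤ Real.log t := le_trans (le_max_right _ _) hlogt
    have hlogtN : ((k₀ + N₀ : ℕ):ℝ) ≤ Real.log t := le_trans (le_max_left _ _) hlogt
    set n : ℕ := ⌈Real.log t⌉₊ with hndef
    have hm_ge : Real.log t ≤ (n:ℝ) := Nat.le_ceil _
    have hm_le : (n:ℝ) ≤ Real.log t + 1 := (Nat.ceil_lt_add_one (by linarith)).le
    have hnN : k₀ + N₀ ≤ n := by
      have : ((k₀ + N₀ : ℕ):ℝ) ≤ (n:ℝ) := le_trans hlogtN hm_ge
      exact_mod_cast this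
    have hN₀3 : 3 ≤ N₀ := (hN₀ N₀ le_rfl).2
    have h3n : (3:ℝ) ≤ (n:ℝ) := by
      have : 3 ≤ n := by omega
      exact_mod_cast this
    have hloglogt : Real.log 2 ≤ Real.log (Real.log t) :=
      Real.log_le_log (by norm_num) hlogt2
    have hllpos : 0 < Real.log (Real.log t) :=
      lt_of_lt_of_le (Real.log_pos (by norm_num)) hloglogt
    -- ω is not in E n
    have hnE := hnotE n hnN
    simp only [hEdef, Set.mem_setOf_eq, not_le] at hnE
    -- H t ω is at most the sup over [0, exp n]
    have htle : t ≤ Real.exp n := by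
      calc t = Real.exp (Real.log t) := (Real.exp_log htpos).symm
        _ ≤ Real.exp n := Real.exp_le_exp.2 hm_ge
    have hHt : H t ω ≤ ⨆ q : D, H (Real.exp n * q) ω := by
      have hgc : Continuous fun s : ℝ => H (Real.exp n * s) ω :=
        (hcont ω).comp (continuous_const.mul continuous_id)
      have hmem : t / Real.exp n ∈ Set.Icc (0:ℝ) 1 := by
        constructor
        · positivity
        · rw [div_le_one (Real.exp_pos _)]; exact htle
      have h1 : H t ω = (fun s : ℝ => H (Real.exp n * s) ω) (t / Real.exp n) := by
        simp only []
        rw [mul_div_cancel₀ _ (ne_of_gt (Real.exp_pos (n:ℝ)))]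
      rw [h1, ← supD _ hgc]
      exact le_ciSup (bddI _ hgc) ⟨t / Real.exp n, hmem⟩
    have hHt2 : H t ω < (Real.exp n) ^ ((1:ℝ)/3) * g n := lt_of_le_of_lt hHt hnE
    -- bound the threshold
    have hA : (Real.exp n) ^ ((1:ℝ)/3) ≤ (Real.exp 1) ^ ((1:ℝ)/3) * t ^ ((1:ℝ)/3) := by
      have h1 : Real.exp (n:ℝ) ≤ Real.exp 1 * t := by
        calc Real.exp (n:ℝ) ≤ Real.exp (Real.log t + 1) := Real.exp_le_exp.2 hm_le
          _ = Real.exp 1 * t := by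
              rw [Real.exp_add, Real.exp_log htpos]; ring
      calc (Real.exp (n:ℝ)) ^ ((1:ℝ)/3) ≤ (Real.exp 1 * t) ^ ((1:ℝ)/3) :=
            Real.rpow_le_rpow (le_of_lt (Real.exp_pos _)) h1 (by norm_num)
        _ = (Real.exp 1) ^ ((1:ℝ)/3) * t ^ ((1:ℝ)/3) :=
            Real.mul_rpow (le_of_lt (Real.exp_pos _)) (le_of_lt htpos)
    have hB : (Real.log n) ^ ((2:ℝ)/3)
        ≤ 2 ^ ((2:ℝ)/3) * (Real.log (Real.log t)) ^ ((2:ℝ)/3) := by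
      have h1 : Real.log n ≤ 2 * Real.log (Real.log t) := by
        calc Real.log n ≤ Real.log (Real.log t + 1) :=
              Real.log_le_log (by linarith) hm_le
          _ ≤ Real.log (2 * Real.log t) :=
              Real.log_le_log (by linarith) (by linarith)
          _ = Real.log 2 + Real.log (Real.log t) :=
              Real.log_mul (by norm_num) (by linarith)
          _ ≤ 2 * Real.log (Real.log t) := by linarith
      calc (Real.log n) ^ ((2:ℝ)/3) ≤ (2 * Real.log (Real.log t)) ^ ((2:ℝ)/3) :=
            Real.rpow_le_rpow (Real.log_nonneg (by linarith)) h1 (by norm_num)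
        _ = 2 ^ ((2:ℝ)/3) * (Real.log (Real.log t)) ^ ((2:ℝ)/3) :=
            Real.mul_rpow (by norm_num) (le_of_lt hllpos)
    have hden : 0 < t ^ ((1:ℝ)/3) * (Real.log (Real.log t)) ^ ((2:ℝ)/3) := by
      have := Real.rpow_pos_of_pos htpos ((1:ℝ)/3)
      have := Real.rpow_pos_of_pos hllpos ((2:ℝ)/3)
      positivity
    rw [div_le_iff₀ hden]
    have hfinal : (Real.exp n) ^ ((1:ℝ)/3) * g n
        ≤ l * (t ^ ((1:ℝ)/3) * (Real.log (Real.log t)) ^ ((2:ℝ)/3)) := by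
      have hgn : g n = K * (Real.log n) ^ ((2:ℝ)/3) := rfl
      rw [hgn, hldef]
      calc (Real.exp (n:ℝ)) ^ ((1:ℝ)/3) * (K * (Real.log n) ^ ((2:ℝ)/3))
          ≤ ((Real.exp 1) ^ ((1:ℝ)/3) * t ^ ((1:ℝ)/3)) *
            (K * (2 ^ ((2:ℝ)/3) * (Real.log (Real.log t)) ^ ((2:ℝ)/3))) := by
            have hApos : 0 ≤ (Real.exp (n:ℝ)) ^ ((1:ℝ)/3) :=
              le_of_lt (Real.rpow_pos_of_pos (Real.exp_pos _) _)
            have hBpos : 0 ≤ (Real.log (n:ℝ)) ^ ((2:ℝ)/3) :=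
              Real.rpow_nonneg (Real.log_nonneg (by linarith)) _
            gcongr
        _ = (Real.exp 1) ^ ((1:ℝ)/3) * K * 2 ^ ((2:ℝ)/3) *
            (t ^ ((1:ℝ)/3) * (Real.log (Real.log t)) ^ ((2:ℝ)/3)) := by ring
    linarith
  -- conclude about the limsup
  rw [Filter.limsup_eq]
  by_cases hb : BddBelow {a : ℝ | ∀ᶠ t : ℝ in atTop,
      H t ω / (t ^ ((1:ℝ)/3) * (Real.log (Real.log t)) ^ ((2:ℝ)/3)) ≤ a}
  · exact csInf_le hb hev
  · rw [Real.sInf_of_not_bddBelow hb]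
    exact le_of_lt hlpos
end
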